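/- Let A be a simple unital C*-algebra, α an action of ℤ/2ℤ on A, B = A ⋊_α ℤ/2ℤ, and p ∈ A a projection with [p] ≠ [α(p)] in K_0(A). Then the inclusion pAp ⊂ pBp cannot be expressed as pAp ⊂ (pAp) ⋊_β ℤ/2ℤ for any action β of ℤ/2ℤ on pAp (via an isomorphism of pBp with the crossed product restricting to the identity on pAp). -/

import Mathlib

/-- A C*-algebra is simple: it has no nontrivial closed two-sided ideals. -/
def IsSimpleCStar (R : Type*) [NonUnitalNonAssocRing R] [TopologicalSpace R] : Prop :=
  ∀ I : TwoSidedIdeal R, IsClosed (I : Set R) → I = ⊥ ∨ I = ⊤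

/-- The projection `p` padded with `k` copies of `1` on the diagonal. -/
def padProj {R : Type*} [Ring R] (p : R) (k : ℕ) :
    Matrix (Fin (k + 1)) (Fin (k + 1)) R :=
  Matrix.diagonal (fun i => if i = 0 then p else 1)

/-- Two projections `p`, `q` of a *-ring define the same class in `K₀`:
they become Murray–von Neumann equivalent after adding `k` copies of `1`. -/
def K0Eq {R : Type*} [Ring R] [StarRing R] (p q : R) : Prop :=
  ∃ (k : ℕ) (w : Matrix (Fin (k + 1)) (Fin (k + 1)) R),
    w * star w = padProj p k ∧ star w * w = padProj q k


open scoped ComplexOrder in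
lemma commute_cfc' {A : Type*} [CStarAlgebra A] {z x : A} (hz : IsSelfAdjoint z)
    (hxz : x * z = z * x) (g : ℝ → ℝ) (hg : ContinuousOn g (spectrum ℝ z)) :
    x * cfc g z = cfc g z * x := by
  haveI : CompactSpace (spectrum ℝ z) :=
    ContinuousFunctionalCalculus.compactSpace_spectrum (R := ℝ) (p := IsSelfAdjoint) z
  rw [cfc_apply g z hz hg]
  set X : C(spectrum ℝ z, ℝ) := (ContinuousMap.id ℝ).restrict (spectrum ℝ z) with hX
  set P : Subalgebra ℝ C(spectrum ℝ z, ℝ) := Algebra.adjoin ℝ {X} with hP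
  have hsep : P.SeparatesPoints := by
    intro s t hst
    refine ⟨X, ⟨X, Algebra.subset_adjoin (Set.mem_singleton X), rfl⟩, ?_⟩
    simpa [X, ContinuousMap.restrict] using fun h => hst (Subtype.ext h)
  have htop := ContinuousMap.subalgebra_topologicalClosure_eq_top_of_separatesPoints P hsep
  set S : Set C(spectrum ℝ z, ℝ) := {q | x * cfcHom hz q = cfcHom hz q * x} with hS
  have hSclosed : IsClosed S := by
    apply isClosed_eq
    · exact (continuous_mul_left x).comp (cfcHom_isClosedEmbedding hz).continuous
    · exact (continuous_mul_right x).comp (cfcHom_isClosedEmbedding hz).continuous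
  have hPS : (P : Set C(spectrum ℝ z, ℝ)) ⊆ S := by
    intro q hq
    induction hq using Algebra.adjoin_induction with
    | mem q hq =>
      rw [Set.mem_singleton_iff] at hq
      subst hq
      simpa [hS, hX, cfcHom_id hz] using hxz
    | algebraMap r =>
      simp only [hS, Set.mem_setOf_eq, AlgHomClass.commutes]
      exact (Algebra.commutes r x).symm
    | add q₁ q₂ _ _ h₁ h₂ =>
      simp only [hS, Set.mem_setOf_eq, map_add, mul_add, add_mul] at *
      rw [h₁, h₂]
    | mul q₁ q₂ _ _ h₁ h₂ =>
      simp only [hS, Set.mem_setOf_eq, map_mul] at *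
      calc x * (cfcHom hz q₁ * cfcHom hz q₂) = (x * cfcHom hz q₁) * cfcHom hz q₂ := by
            rw [mul_assoc]
        _ = cfcHom hz q₁ * (x * cfcHom hz q₂) := by rw [h₁, mul_assoc]
        _ = cfcHom hz q₁ * cfcHom hz q₂ * x := by rw [h₂, mul_assoc]
  have : (⟨(spectrum ℝ z).restrict g, hg.restrict⟩ : C(spectrum ℝ z, ℝ)) ∈ S := by
    have h1 : ((⟨(spectrum ℝ z).restrict g, hg.restrict⟩ : C(spectrum ℝ z, ℝ))) ∈
        P.topologicalClosure := htop ▸ Algebra.mem_top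
    have h2 : ((⟨(spectrum ℝ z).restrict g, hg.restrict⟩ : C(spectrum ℝ z, ℝ))) ∈
        closure (P : Set C(spectrum ℝ z, ℝ)) := by
      rwa [← Subalgebra.topologicalClosure_coe]
    exact hSclosed.closure_subset (closure_mono hPS h2)
  exact this

lemma central_scalar {A : Type*} [CStarAlgebra A] [PartialOrder A] [StarOrderedRing A]
    (hA : ∀ I : TwoSidedIdeal A, IsClosed (I : Set A) → I = ⊥ ∨ I = ⊤)
    (p z : A) (hp : p * p = p) (hps : star p = p) (hz : 0 ≤ z)
    (hpz : p * z = z) (hzp : z * p = z)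
    (hcen : ∀ x : A, z * (p * x * p) = (p * x * p) * z) :
    z = ‖z‖ • p := by
  rcases subsingleton_or_nontrivial A with hss | hnt
  · exact Subsingleton.elim _ _
  by_contra hne
  have hzsa : IsSelfAdjoint z := hz.isSelfAdjoint
  set t := ‖z‖ with ht_def
  set y := t • p - z with hy_def
  have hyne : y ≠ 0 := sub_ne_zero.mpr fun h => hne h.symm
  have hzne : z ≠ 0 := by
    intro h0
    apply hne
    rw [h0, ht_def, h0, norm_zero, zero_smul]
  have ht : 0 < t := norm_pos_iff.mpr hzne
  have hppos : (0 : A) ≤ p := by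
    have := star_mul_self_nonneg p
    rwa [hps, hp] at this
  have hsmulp : ∀ r : ℝ, p * algebraMap ℝ A r * p = r • p := by
    intro r
    rw [← Algebra.commutes r p, mul_assoc, hp, ← Algebra.smul_def]
  have hynn : 0 ≤ y := by
    have h1 : 0 ≤ star p * (algebraMap ℝ A t - z) * p :=
      star_left_conjugate_nonneg (by rw [sub_nonneg]; exact hzsa.le_algebraMap_norm_self) p
    have h2 : star p * (algebraMap ℝ A t - z) * p = y := by
      rw [hps, mul_sub, sub_mul, hsmulp, hy_def]
      congr 1
      rw [mul_assoc, ← mul_assoc, hpz, hzp]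
    rwa [h2] at h1
  set s := ‖y‖ with hs_def
  have hs : 0 < s := norm_pos_iff.mpr hyne
  have hyle : y ≤ algebraMap ℝ A t := by
    have h1 : (0 : A) ≤ 1 - p := by
      have h2 := star_mul_self_nonneg (1 - p)
      have h3 : star (1 - p) * (1 - p) = 1 - p := by
        rw [star_sub, star_one, hps]
        rw [mul_sub, sub_mul, sub_mul, hp]
        simp only [mul_one, one_mul]
        abel
      rwa [h3] at h2
    rw [← sub_nonneg]
    have h2 : algebraMap ℝ A t - y = t • (1 - p) + z := by
      rw [hy_def, Algebra.algebraMap_eq_smul_one, smul_sub]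
      abel
    rw [h2]
    exact add_nonneg (smul_nonneg ht.le h1) hz
  have hst : s ≤ t := (CStarAlgebra.norm_le_iff_le_algebraMap y ht.le hynn).mpr hyle
  -- constants and functions
  set c₁ : ℝ := t - s / 4 with hc₁
  set c₂ : ℝ := t - s / 2 with hc₂
  have hc₂pos : 0 < c₂ := by rw [hc₂]; linarith
  have hc₁pos : 0 < c₁ := by rw [hc₁]; linarith
  have hc₂₁ : c₂ < c₁ := by rw [hc₁, hc₂]; linarith
  set f : ℝ → ℝ := fun x => max (x - c₁) 0 with hf
  set k' : ℝ → ℝ := fun x => max (min x c₁ - c₂) 0 / (c₁ - c₂) with hk'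
  set g₂ : ℝ → ℝ := fun x => f x / (max x c₁) ^ 2 with hg₂
  set m : ℝ → ℝ := fun x => k' x / (max x c₂) ^ 2 with hm
  have hfc : Continuous f := (continuous_id.sub continuous_const).max continuous_const
  have hk'c : Continuous k' :=
    (((continuous_id.min continuous_const).sub continuous_const).max continuous_const).div_const _
  have hg₂c : Continuous g₂ := by
    refine hfc.div ((continuous_id.max continuous_const).pow 2) fun x => ?_
    exact pow_ne_zero 2 (le_max_right x c₁ |>.trans_lt' hc₁pos).ne'
  have hmc : Continuous m := by
    refine hk'c.div ((continuous_id.max continuous_const).pow 2) fun x => ?_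
    exact pow_ne_zero 2 (le_max_right x c₂ |>.trans_lt' hc₂pos).ne'
  have hk'01 : ∀ x : ℝ, 0 ≤ k' x ∧ k' x ≤ 1 := by
    intro x
    constructor
    · exact div_nonneg (le_max_right _ _) (by linarith)
    · rw [show k' x = max (min x c₁ - c₂) 0 / (c₁ - c₂) from rfl, div_le_one (by linarith)]
      rcases max_cases (min x c₁ - c₂) 0 with ⟨h1, _⟩ | ⟨h1, _⟩ <;> rw [h1]
      · have : min x c₁ ≤ c₁ := min_le_right _ _
        linarith
      · linarith
  have l1 : ∀ x : ℝ, f x = x * g₂ x * x := by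
    intro x
    rcases le_or_gt x c₁ with hx | hx
    · have hfx : f x = 0 := max_eq_right (by linarith)
      have hgx : g₂ x = 0 := by
        show f x / (max x c₁) ^ 2 = 0
        rw [hfx, zero_div]
      rw [hfx, hgx, mul_zero, zero_mul]
    · have hmax : max x c₁ = x := max_eq_left hx.le
      have hx0 : x ≠ 0 := (hc₁pos.trans hx).ne'
      show f x = x * (f x / (max x c₁) ^ 2) * x
      rw [hmax]
      field_simp
  have l2 : ∀ x : ℝ, k' x = x * m x * x := by
    intro x
    rcases le_or_gt x c₂ with hx | hx
    · have hmin : min x c₁ = x := min_eq_left (by linarith)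
      have hk'x : k' x = 0 := by
        show max (min x c₁ - c₂) 0 / (c₁ - c₂) = 0
        rw [hmin, max_eq_right (by linarith), zero_div]
      have hmx : m x = 0 := by
        show k' x / (max x c₂) ^ 2 = 0
        rw [hk'x, zero_div]
      rw [hk'x, hmx, mul_zero, zero_mul]
    · have hmax : max x c₂ = x := max_eq_left hx.le
      have hx0 : x ≠ 0 := (hc₂pos.trans hx).ne'
      show k' x = x * (k' x / (max x c₂) ^ 2) * x
      rw [hmax]
      field_simp
  have l3 : ∀ x : ℝ, f x * (1 - k' x) = 0 := by
    intro x
    rcases le_or_gt x c₁ with hx | hx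
    · have hfx : f x = 0 := max_eq_right (by linarith)
      rw [hfx, zero_mul]
    · have hmin : min x c₁ = c₁ := min_eq_right hx.le
      have hk1 : k' x = 1 := by
        show max (min x c₁ - c₂) 0 / (c₁ - c₂) = 1
        rw [hmin, max_eq_left (by linarith), div_self (by linarith)]
      rw [hk1, sub_self, mul_zero]
  have l4 : ∀ x : ℝ, 0 ≤ x → x ≤ t → |k' x * (t - x)| ≤ s / 2 := by
    intro x hx0 hxt
    rcases le_or_gt x c₂ with hx | hx
    · have hmin : min x c₁ = x := min_eq_left (by linarith)
      have hk'x : k' x = 0 := by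
        show max (min x c₁ - c₂) 0 / (c₁ - c₂) = 0
        rw [hmin, max_eq_right (by linarith), zero_div]
      rw [hk'x, zero_mul, abs_zero]
      linarith
    · have h1 := hk'01 x
      have h2 : 0 ≤ t - x := by linarith
      have h3 : t - x ≤ s / 2 := by rw [hc₂] at hx; linarith
      rw [abs_of_nonneg (mul_nonneg h1.1 h2)]
      calc k' x * (t - x) ≤ 1 * (s / 2) := mul_le_mul h1.2 h3 h2 zero_le_one
        _ = s / 2 := one_mul _
  -- spectrum facts
  have hspec : ∀ x ∈ spectrum ℝ z, 0 ≤ x ∧ x ≤ t := by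
    intro x hx
    refine ⟨spectrum_nonneg_of_nonneg hz hx, ?_⟩
    exact (Real.le_norm_self x).trans (spectrum.norm_le_norm_of_mem hx)
  -- the element a
  set a := cfc f z with ha_def
  have hane : a ≠ 0 := by
    have hmem : t ∈ spectrum ℝ z := CStarAlgebra.norm_mem_spectrum_of_nonneg hz
    have h1 : ‖f t‖ ≤ ‖a‖ :=
      norm_apply_le_norm_cfc f z hmem hfc.continuousOn hzsa
    have h2 : f t = s / 4 := by
      show max (t - c₁) 0 = s / 4
      rw [show t - c₁ = s / 4 by rw [hc₁]; ring]
      exact max_eq_left (by linarith)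
    intro h0
    rw [h0, norm_zero] at h1
    rw [h2, Real.norm_eq_abs, abs_of_nonneg (by linarith)] at h1
    linarith
  have ha_eq : a = z * cfc g₂ z * z := by
    rw [ha_def, cfc_congr (g := fun x : ℝ => x * g₂ x * x) (fun x _ => l1 x)]
    rw [cfc_mul (fun x : ℝ => x * g₂ x) (fun x : ℝ => x) z
      ((continuous_id.mul hg₂c).continuousOn) continuous_id.continuousOn]
    rw [cfc_mul (fun x : ℝ => x) g₂ z continuous_id.continuousOn hg₂c.continuousOn]
    rw [cfc_id' ℝ z]
  have hap : a * p = a := by rw [ha_eq, mul_assoc, hzp]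
  have hpa : p * a = a := by rw [ha_eq, ← mul_assoc, ← mul_assoc, hpz]
  -- the element ck and b
  set ck := cfc k' z with hck_def
  have hck_eq : ck = z * cfc m z * z := by
    rw [hck_def, cfc_congr (g := fun x : ℝ => x * m x * x) (fun x _ => l2 x)]
    rw [cfc_mul (fun x : ℝ => x * m x) (fun x : ℝ => x) z
      ((continuous_id.mul hmc).continuousOn) continuous_id.continuousOn]
    rw [cfc_mul (fun x : ℝ => x) m z continuous_id.continuousOn hmc.continuousOn]
    rw [cfc_id' ℝ z]
  have hckp : ck * p = ck := by rw [hck_eq, mul_assoc, hzp]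
  have hpck : p * ck = ck := by rw [hck_eq, ← mul_assoc, ← mul_assoc, hpz]
  have hyp : y * p = y := by
    rw [hy_def, sub_mul, smul_mul_assoc, hp, hzp]
  have hpy : p * y = y := by
    rw [hy_def, mul_sub, mul_smul_comm, hp, hpz]
  set b := y - ck * y with hb_def
  have hbp : b * p = b := by rw [hb_def, sub_mul, hyp, mul_assoc, hyp]
  have hpb : p * b = b := by rw [hb_def, mul_sub, hpy, ← mul_assoc, hpck]
  have hbne : b ≠ 0 := by
    intro h0
    have h1 : y = ck * y := by
      have := sub_eq_zero.mp (hb_def ▸ h0)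
      exact this
    have h2 : y = cfc (fun x : ℝ => k' x * (t - x)) z := by
      calc y = ck * y := h1
        _ = t • (ck * p) - ck * z := by rw [hy_def, mul_sub, mul_smul_comm]
        _ = t • ck - ck * z := by rw [hckp]
        _ = cfc (fun x : ℝ => t • k' x) z - cfc (fun x : ℝ => k' x * x) z := by
            rw [cfc_smul t k' z hk'c.continuousOn]
            rw [cfc_mul k' (fun x : ℝ => x) z hk'c.continuousOn continuous_id.continuousOn,
              cfc_id' ℝ z]
        _ = cfc (fun x : ℝ => t • k' x - k' x * x) z := by
            rw [cfc_sub (fun x : ℝ => t • k' x) (fun x : ℝ => k' x * x) z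
              ((hk'c.const_smul t).continuousOn) ((hk'c.mul continuous_id).continuousOn)]
        _ = cfc (fun x : ℝ => k' x * (t - x)) z := by
            apply cfc_congr
            intro x _
            simp only [smul_eq_mul]
            ring
    have h3 : ‖y‖ ≤ s / 2 := by
      rw [h2]
      refine norm_cfc_le (by linarith) fun x hx => ?_
      obtain ⟨hx0, hxt⟩ := hspec x hx
      rw [Real.norm_eq_abs]
      exact l4 x hx0 hxt
    rw [← hs_def] at h3
    linarith
  have hab : a * b = 0 := by
    have h1 : a * ck = cfc (fun x : ℝ => f x * k' x) z := by
      rw [cfc_mul f k' z hfc.continuousOn hk'c.continuousOn]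
    have h2 : a - a * ck = cfc (fun x : ℝ => f x * (1 - k' x)) z := by
      rw [cfc_congr (g := fun x : ℝ => f x - f x * k' x) (fun x _ => by ring)]
      rw [cfc_sub f (fun x : ℝ => f x * k' x) z hfc.continuousOn
        ((hfc.mul hk'c).continuousOn), h1]
    have h3 : a - a * ck = 0 := by
      rw [h2, cfc_congr (g := fun _ : ℝ => (0 : ℝ)) (fun x _ => l3 x)]
      exact cfc_const_zero ℝ z
    calc a * b = (a - a * ck) * y := by rw [hb_def, mul_sub, sub_mul, mul_assoc]
      _ = 0 := by rw [h3, zero_mul]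
  -- commuting
  have hcomm : ∀ x : A, (p * x * p) * a = a * (p * x * p) := fun x =>
    commute_cfc' hzsa (hcen x).symm f hfc.continuousOn
  -- the ideal
  set S : Set A := {c | ∃ x' y' : A, c = x' * b * y'} with hSdef
  set M : Submodule ℂ A := Submodule.span ℂ S with hMdef
  set MCl : Submodule ℂ A := M.topologicalClosure with hMCl
  have hmul_left : ∀ (x : A) {c : A}, c ∈ MCl → x * c ∈ MCl := by
    intro x c hc
    have hmaps : Set.MapsTo (fun d => x * d) (M : Set A) (M : Set A) := by
      intro d hd
      refine Submodule.span_induction ?_ ?_ ?_ ?_ hd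
      · rintro e ⟨x', y', rfl⟩
        exact Submodule.subset_span ⟨x * x', y', by simp only [mul_assoc]⟩
      · simp only [mul_zero]; exact Submodule.zero_mem M
      · intro e₁ e₂ _ _ h₁ h₂
        simpa only [mul_add, SetLike.mem_coe] using Submodule.add_mem M h₁ h₂
      · intro r e _ h₁
        simpa only [mul_smul_comm, SetLike.mem_coe] using Submodule.smul_mem M r h₁
    exact map_mem_closure (continuous_mul_left x) hc hmaps
  have hmul_right : ∀ (x : A) {c : A}, c ∈ MCl → c * x ∈ MCl := by
    intro x c hc
    have hmaps : Set.MapsTo (fun d => d * x) (M : Set A) (M : Set A) := by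
      intro d hd
      refine Submodule.span_induction ?_ ?_ ?_ ?_ hd
      · rintro e ⟨x', y', rfl⟩
        exact Submodule.subset_span ⟨x', y' * x, by simp only [mul_assoc]⟩
      · simp only [zero_mul]; exact Submodule.zero_mem M
      · intro e₁ e₂ _ _ h₁ h₂
        simpa only [add_mul, SetLike.mem_coe] using Submodule.add_mem M h₁ h₂
      · intro r e _ h₁
        simpa only [smul_mul_assoc, SetLike.mem_coe] using Submodule.smul_mem M r h₁
    exact map_mem_closure (f := fun d : A => d * x) (continuous_mul_right x) hc hmaps
  set I : TwoSidedIdeal A := TwoSidedIdeal.mk' (MCl : Set A)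
    (Submodule.zero_mem MCl)
    (fun ha hb => Submodule.add_mem MCl ha hb)
    (fun ha => Submodule.neg_mem MCl ha)
    (fun {x y} hy => hmul_left x hy)
    (fun {x y} hx => hmul_right y hx) with hI
  have hIc : IsClosed (I : Set A) := by
    rw [hI, TwoSidedIdeal.coe_mk']
    exact isClosed_closure
  have hbI : b ∈ I := by
    rw [hI, TwoSidedIdeal.mem_mk']
    exact subset_closure (Submodule.subset_span ⟨1, 1, by rw [one_mul, mul_one]⟩)
  rcases hA I hIc with hbot | htop
  · rw [hbot, TwoSidedIdeal.mem_bot] at hbI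
    exact hbne hbI
  · have hpI : p ∈ I := by rw [htop]; exact TwoSidedIdeal.mem_top A
    rw [hI, TwoSidedIdeal.mem_mk'] at hpI
    -- kernel set
    set K : Set A := {c | a * (p * c * p) = 0} with hK
    have hKclosed : IsClosed K := by
      have hcont : Continuous fun c : A => a * (p * c * p) :=
        continuous_const.mul ((continuous_const.mul continuous_id).mul continuous_const)
      exact isClosed_eq hcont continuous_const
    have hMK : (M : Set A) ⊆ K := by
      intro d hd
      refine Submodule.span_induction ?_ ?_ ?_ ?_ hd
      · rintro e ⟨x', y', rfl⟩
        show a * (p * (x' * b * y') * p) = 0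
        have e1 : p * (x' * b * y') * p = (p * x' * p) * b * (p * y' * p) := by
          conv_lhs => rw [← hpb, ← hbp]
          simp only [mul_assoc]
        rw [e1]
        have e2 : a * (p * x' * p * b * (p * y' * p))
            = (a * (p * x' * p)) * (b * (p * y' * p)) := by simp only [mul_assoc]
        rw [e2, ← hcomm x']
        have e3 : p * x' * p * a * (b * (p * y' * p))
            = (p * x' * p) * ((a * b) * (p * y' * p)) := by simp only [mul_assoc]
        rw [e3, hab, zero_mul, mul_zero]
      · show a * (p * 0 * p) = 0
        rw [mul_zero, zero_mul, mul_zero]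
      · intro e₁ e₂ _ _ h₁ h₂
        show a * (p * (e₁ + e₂) * p) = 0
        rw [mul_add, add_mul, mul_add, h₁, h₂, add_zero]
      · intro r e _ h₁
        show a * (p * (r • e) * p) = 0
        rw [mul_smul_comm, smul_mul_assoc, mul_smul_comm, h₁, smul_zero]
    have hpK : p ∈ K := hKclosed.closure_subset (closure_mono hMK hpI)
    have : a = 0 := by
      have h1 : a * (p * p * p) = 0 := hpK
      rw [hp, hp, hap] at h1
      exact h1
    exact hane this

section helper2
variable {A : Type*} [CStarAlgebra A]

variable {A : Type*} [CStarAlgebra A]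

lemma matrix_one_mul_star {v q : A} (hq : v * star v = q) :
    (Matrix.of fun _ _ : Fin 1 => v) * star (Matrix.of fun _ _ : Fin 1 => v) = padProj q 0 := by
  ext i j
  rw [Subsingleton.elim i 0, Subsingleton.elim j 0]
  simp [padProj, Matrix.mul_apply, Matrix.star_eq_conjTranspose, Matrix.conjTranspose_apply, hq]

lemma matrix_one_star_mul {v q : A} (hq : star v * v = q) :
    star (Matrix.of fun _ _ : Fin 1 => v) * (Matrix.of fun _ _ : Fin 1 => v) = padProj q 0 := by
  ext i j
  rw [Subsingleton.elim i 0, Subsingleton.elim j 0]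
  simp [padProj, Matrix.mul_apply, Matrix.star_eq_conjTranspose, Matrix.conjTranspose_apply, hq]

end helper2

/-- Proposition 5.10: Let `A` be a simple unital C*-algebra,
`B = A ⋊_α ℤ/2ℤ`, and `p ∈ A` a projection with `[p] ≠ [α(p)]` in `K₀(A)`.  Then the
inclusion `pAp ⊆ pBp` is not a `ℤ/2ℤ`-crossed-product inclusion: there is no
self-adjoint unitary `w` of the corner `pBp` normalizing `pAp` such that every element
of `pBp` is uniquely of the form `a₀ + a₁ w` with `a₀, a₁ ∈ pAp`. -/
theorem stmt_19 {A B : Type*} [CStarAlgebra A] [CStarAlgebra B]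
    (hA : IsSimpleCStar A)
    (ι : A →⋆ₐ[ℂ] B) (hι : Function.Injective ι)
    (α : A ≃⋆ₐ[ℂ] A) (hα : ∀ a, α (α a) = a)
    (u : B) (hus : star u = u) (huu : u * u = 1)
    (hcov : ∀ a : A, u * ι a * u = ι (α a))
    (hdecomp : ∀ b : B, ∃! c : A × A, b = ι c.1 + ι c.2 * u)
    (p : A) (hp : p * p = p) (hps : star p = p)
    (hK : ¬ K0Eq p (α p)) :
    ¬ ∃ w : B, star w = w ∧ w * w = ι p ∧ ι p * w * ι p = w ∧
      (∀ a : A, ∃ a' : A, w * ι (p * a * p) * w = ι (p * a' * p)) ∧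
      (∀ b : B, ι p * b * ι p = b →
        ∃! c : A × A, b = ι (p * c.1 * p) + ι (p * c.2 * p) * w) := by
  rintro ⟨w, hws, hww, hpwp, hnorm, hcp⟩
  apply hK
  rcases subsingleton_or_nontrivial A with hss | hnt
  · exact ⟨0, 0, Subsingleton.elim _ _, Subsingleton.elim _ _⟩
  letI : PartialOrder A := CStarAlgebra.spectralOrder A
  letI : StarOrderedRing A := CStarAlgebra.spectralOrderedRing A
  obtain ⟨⟨h, a₁⟩, hwdef, -⟩ := hdecomp w
  simp only at hwdef
  -- uniqueness of u-decompositions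
  have uniq : ∀ x y x' y' : A, ι x + ι y * u = ι x' + ι y' * u → x = x' ∧ y = y' := by
    intro x y x' y' e
    have h1 := (hdecomp (ι x' + ι y' * u)).unique (y₁ := ((x, y) : A × A))
      (y₂ := ((x', y') : A × A)) e.symm rfl
    exact ⟨congrArg Prod.fst h1, congrArg Prod.snd h1⟩
  have R0 : ∀ c : A, u * ι c = ι (α c) * u := by
    intro c
    have h1 : u * ι c * u * u = ι (α c) * u := by rw [hcov]
    rwa [mul_assoc (u * ι c), huu, mul_one] at h1
  -- star decomposition
  have hstar : star h = h ∧ α (star a₁) = a₁ := by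
    apply uniq
    calc ι (star h) + ι (α (star a₁)) * u = ι (star h) + u * ι (star a₁) := by rw [R0]
      _ = star (ι h) + star u * star (ι a₁) := by rw [map_star, hus, map_star]
      _ = star (ι h + ι a₁ * u) := by rw [star_add, star_mul]
      _ = star w := by rw [hwdef]
      _ = w := hws
      _ = ι h + ι a₁ * u := hwdef
  have hh_sa : star h = h := hstar.1
  have ha₁_star : star a₁ = α a₁ := by
    have := congrArg α hstar.2
    rwa [hα] at this
  -- general product expansion
  have mulexp : ∀ x y x' y' : A, (ι x + ι y * u) * (ι x' + ι y' * u)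
      = ι (x * x' + y * α y') + ι (x * y' + y * α x') * u := by
    intro x y x' y'
    have e1 : ι y * u * ι x' = ι (y * α x') * u := by
      rw [mul_assoc, R0, ← mul_assoc, ← map_mul]
    have e2 : ι y * u * (ι y' * u) = ι (y * α y') := by
      rw [mul_assoc, ← mul_assoc u, R0, mul_assoc, huu, mul_one, ← map_mul]
    have e3 : ι x * (ι y' * u) = ι (x * y') * u := by
      rw [← mul_assoc, ← map_mul]
    rw [add_mul, mul_add, mul_add, ← map_mul, e1, e2, e3, map_add, map_add, add_mul]
    abel
  -- relations from w * w = ι p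
  have hE2 : h * h + a₁ * α a₁ = p ∧ h * a₁ + a₁ * α h = 0 := by
    apply uniq
    calc ι (h * h + a₁ * α a₁) + ι (h * a₁ + a₁ * α h) * u
        = (ι h + ι a₁ * u) * (ι h + ι a₁ * u) := (mulexp h a₁ h a₁).symm
      _ = w * w := by rw [hwdef]
      _ = ι p := hww
      _ = ι p + ι 0 * u := by rw [map_zero, zero_mul, add_zero]
  -- relations from ι p * w * ι p = w
  have hE3 : p * h * p = h ∧ p * a₁ * α p = a₁ := by
    apply uniq
    have e0 : ι p = ι p + ι 0 * u := by rw [map_zero, zero_mul, add_zero]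
    calc ι (p * h * p) + ι (p * a₁ * α p) * u
        = (ι (p * h) + ι (p * a₁) * u) * (ι p + ι 0 * u) := by
          rw [mulexp]
          simp only [map_zero, mul_zero, zero_mul, add_zero, zero_add]
      _ = ((ι p + ι 0 * u) * (ι h + ι a₁ * u)) * (ι p + ι 0 * u) := by
          rw [mulexp p 0 h a₁]
          simp only [map_zero, mul_zero, zero_mul, add_zero, zero_add]
      _ = ι p * w * ι p := by rw [← e0, hwdef]
      _ = w := hpwp
      _ = ι h + ι a₁ * u := hwdef
  have cor_left : ∀ x : A, p * x * p = x → p * x = x := by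
    intro x hx
    conv_lhs => rw [← hx]
    simp only [← mul_assoc]
    rw [hp, hx]
  have cor_right : ∀ x : A, p * x * p = x → x * p = x := by
    intro x hx
    conv_lhs => rw [← hx]
    rw [mul_assoc (p * x), hp, hx]
  have hph : p * h = h := cor_left h hE3.1
  have hhp : h * p = h := cor_right h hE3.1
  have hpa₁ : p * a₁ = a₁ := by
    conv_lhs => rw [← hE3.2]
    simp only [← mul_assoc]
    rw [hp, hE3.2]
  have ha₁αp : a₁ * α p = a₁ := by
    conv_lhs => rw [← hE3.2]
    rw [mul_assoc (p * a₁), ← map_mul, hp, hE3.2]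
  -- conjugation formula
  have wconj : ∀ x : A, w * ι x * w
      = ι (h * x * h + a₁ * α x * α a₁) + ι (h * x * a₁ + a₁ * α x * α h) * u := by
    intro x
    have e0 : (ι h + ι a₁ * u) * ι x = ι (h * x) + ι (a₁ * α x) * u := by
      have := mulexp h a₁ x 0
      simpa [map_zero] using this
    calc w * ι x * w = (ι h + ι a₁ * u) * ι x * (ι h + ι a₁ * u) := by rw [hwdef]
      _ = (ι (h * x) + ι (a₁ * α x) * u) * (ι h + ι a₁ * u) := by rw [e0]
      _ = ι (h * x * h + a₁ * α x * α a₁) + ι (h * x * a₁ + a₁ * α x * α h) * u := by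
          rw [mulexp]
  have E5 : ∀ x : A, p * x * p = x →
      h * x * a₁ + a₁ * α x * α h = 0 ∧ w * ι x * w = ι (h * x * h + a₁ * α x * α a₁) := by
    intro x hx
    obtain ⟨a', ha'⟩ := hnorm x
    rw [hx] at ha'
    have h1 : ι (h * x * h + a₁ * α x * α a₁) + ι (h * x * a₁ + a₁ * α x * α h) * u
        = ι (p * a' * p) + ι 0 * u := by
      rw [← wconj x, ha', map_zero, zero_mul, add_zero]
    obtain ⟨-, e2⟩ := uniq _ _ _ _ h1
    exact ⟨e2, by rw [wconj x, e2, map_zero, zero_mul, add_zero]⟩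
  -- injectivity of right multiplication by a₁ on the corner
  have E6inj : ∀ x : A, p * x * p = x → x * a₁ = 0 → x = 0 := by
    intro x hx hxa
    have hpx := cor_left x hx
    have hxh_cor : p * (x * h) * p = x * h := by
      rw [← mul_assoc p x h, hpx, mul_assoc x h p, hhp]
    have key : (0 : B) = ι (p * -(x * h) * p) + ι (p * x * p) * w := by
      have hneg : p * -(x * h) * p = -(x * h) := by rw [mul_neg, neg_mul, hxh_cor]
      rw [hneg, hx, hwdef, mul_add, ← map_mul, ← mul_assoc (ι x), ← map_mul, hxa, map_zero,
        zero_mul, add_zero, map_neg]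
      exact (neg_add_cancel _).symm
    have key0 : (0 : B) = ι (p * 0 * p) + ι (p * 0 * p) * w := by simp
    have hu := (hcp 0 (by rw [mul_zero, zero_mul])).unique
      (y₁ := ((-(x * h), x) : A × A)) (y₂ := ((0, 0) : A × A)) key key0
    have := congrArg Prod.snd hu
    simpa using this
  -- surjectivity : definition of β
  have E6surj : ∀ x : A, ∃ cβ : A, p * cβ * p = cβ ∧ cβ * a₁ = a₁ * α (p * x * p) := by
    intro x
    have hxx : (p * x * p) * p = p * x * p := by rw [mul_assoc, hp]
    have hbB : ι p * (ι (a₁ * α (p * x * p)) * u) * ι p = ι (a₁ * α (p * x * p)) * u := by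
      calc ι p * (ι (a₁ * α (p * x * p)) * u) * ι p
          = ι (p * (a₁ * α (p * x * p))) * u * ι p := by rw [← mul_assoc, ← map_mul]
        _ = ι (p * (a₁ * α (p * x * p))) * (ι (α p) * u) := by rw [mul_assoc, R0]
        _ = ι (p * (a₁ * α (p * x * p)) * α p) * u := by rw [← mul_assoc, ← map_mul]
        _ = ι (a₁ * α (p * x * p)) * u := by
            rw [← mul_assoc p a₁, hpa₁, mul_assoc a₁, ← map_mul, hxx]
    obtain ⟨⟨c₀, c₁⟩, hcdef, -⟩ := hcp (ι (a₁ * α (p * x * p)) * u) hbB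
    simp only at hcdef
    refine ⟨p * c₁ * p, ?_, ?_⟩
    · simp only [← mul_assoc]
      rw [hp, mul_assoc (p * c₁) p p, hp]
    · have h1 : ι 0 + ι (a₁ * α (p * x * p)) * u
          = ι (p * c₀ * p + p * c₁ * p * h) + ι (p * c₁ * p * a₁) * u := by
        calc ι 0 + ι (a₁ * α (p * x * p)) * u = ι (a₁ * α (p * x * p)) * u := by
              rw [map_zero, zero_add]
          _ = ι (p * c₀ * p) + ι (p * c₁ * p) * w := hcdef
          _ = ι (p * c₀ * p) + (ι (p * c₁ * p) * ι h + ι (p * c₁ * p) * (ι a₁ * u)) := by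
              rw [hwdef, mul_add]
          _ = ι (p * c₀ * p) + (ι (p * c₁ * p * h) + ι (p * c₁ * p * a₁) * u) := by
              rw [← map_mul, ← mul_assoc, ← map_mul]
          _ = ι (p * c₀ * p + p * c₁ * p * h) + ι (p * c₁ * p * a₁) * u := by
              rw [map_add, add_assoc]
      obtain ⟨-, e2⟩ := uniq _ _ _ _ h1
      exact e2.symm
  choose β hβcor hβa using E6surj
  have hβa' : ∀ x : A, p * x * p = x → a₁ * α x = β x * a₁ := by
    intro x hx
    have := hβa x
    rw [hx] at this
    exact this.symm
  have hii : ∀ x : A, p * x * p = x → h * x = β x * h := by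
    intro x hx
    have e5 := (E5 x hx).1
    have e7 : a₁ * α h = -(h * a₁) := by
      have h2 := hE2.2
      rw [add_comm] at h2
      rwa [add_eq_zero_iff_eq_neg] at h2
    have e8 : (h * x - β x * h) * a₁ = 0 := by
      have e9 : h * x * a₁ = β x * h * a₁ := by
        have e10 : a₁ * α x * α h = -(β x * (h * a₁)) := by
          rw [hβa' x hx, mul_assoc, e7, mul_neg]
        have e5' := e5
        rw [e10, add_neg_eq_zero] at e5'
        rw [e5', ← mul_assoc]
      rw [sub_mul, e9, sub_self]
    have hcor : p * (h * x - β x * h) * p = h * x - β x * h := by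
      rw [mul_sub, sub_mul]
      congr 1
      · rw [← mul_assoc p h x, hph, mul_assoc h x p, cor_right x hx]
      · rw [← mul_assoc p (β x) h, cor_left _ (hβcor x), mul_assoc (β x) h p, hhp]
    exact sub_eq_zero.mp (E6inj _ hcor e8)
  have hiii : ∀ x : A, p * x * p = x → w * ι x * w = ι (β x) := by
    intro x hx
    have e2 : h * x * h + a₁ * α x * α a₁ = β x := by
      rw [show h * x = β x * h from hii x hx, hβa' x hx]
      rw [mul_assoc (β x) h h, mul_assoc (β x) a₁ (α a₁), ← mul_add, hE2.1,
        cor_right _ (hβcor x)]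
    rw [(E5 x hx).2, e2]
  have hββ : ∀ x : A, p * x * p = x → β (β x) = x := by
    intro x hx
    apply hι
    have e1 : w * (w * ι x * w) * w = ι x := by
      calc w * (w * ι x * w) * w = (w * w) * ι x * (w * w) := by simp only [mul_assoc]
        _ = ι p * ι x * ι p := by rw [hww]
        _ = ι (p * x * p) := by rw [← map_mul, ← map_mul]
        _ = ι x := by rw [hx]
    calc ι (β (β x)) = w * ι (β x) * w := (hiii (β x) (hβcor x)).symm
      _ = w * (w * ι x * w) * w := by rw [hiii x hx]
      _ = ι x := e1
  have hcen2 : ∀ x : A, p * x * p = x → (h * h) * x = x * (h * h) := by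
    intro x hx
    calc h * h * x = h * (h * x) := mul_assoc h h x
      _ = h * (β x * h) := by rw [hii x hx]
      _ = (h * β x) * h := (mul_assoc h (β x) h).symm
      _ = (β (β x) * h) * h := by rw [hii (β x) (hβcor x)]
      _ = x * (h * h) := by rw [hββ x hx, mul_assoc]
  -- the intertwiner n and its square z
  have ha₁αa₁ : a₁ * α a₁ = p - h * h := eq_sub_of_add_eq' hE2.1
  have hsn : star (h * a₁) = α a₁ * h := by rw [star_mul, ha₁_star, hh_sa]
  have hz1 : (h * a₁) * star (h * a₁) = h * h - h * h * (h * h) := by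
    rw [hsn]
    calc h * a₁ * (α a₁ * h) = h * (a₁ * α a₁) * h := by simp only [mul_assoc]
      _ = h * (p - h * h) * h := by rw [ha₁αa₁]
      _ = h * h - h * h * (h * h) := by
          rw [mul_sub, sub_mul, hhp]
          simp only [mul_assoc]
  set z := h * h - h * h * (h * h) with hzdef
  have hpz : p * z = z := by
    rw [hzdef, mul_sub, ← mul_assoc p h h, hph, ← mul_assoc p (h * h) (h * h),
      ← mul_assoc p h h, hph]
  have hzp : z * p = z := by
    rw [hzdef, sub_mul, mul_assoc h h p, hhp, mul_assoc (h * h) (h * h) p,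
      mul_assoc h h p, hhp]
  have hzpos : (0 : A) ≤ z := hz1 ▸ mul_star_self_nonneg (h * a₁)
  have hzcen : ∀ x0 : A, z * (p * x0 * p) = (p * x0 * p) * z := by
    intro x0
    have hx : p * (p * x0 * p) * p = p * x0 * p := by
      simp only [← mul_assoc]
      rw [hp, mul_assoc (p * x0) p p, hp]
    set x := p * x0 * p with hxd
    have c2 := hcen2 x hx
    have c4 : (h * h * (h * h)) * x = x * (h * h * (h * h)) := by
      calc (h * h * (h * h)) * x = h * h * ((h * h) * x) := by simp only [mul_assoc]
        _ = h * h * (x * (h * h)) := by rw [c2]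
        _ = (h * h * x) * (h * h) := by simp only [mul_assoc]
        _ = (x * (h * h)) * (h * h) := by rw [c2]
        _ = x * (h * h * (h * h)) := by simp only [mul_assoc]
    rw [hzdef, sub_mul, mul_sub, c2, c4]
  have hscal : z = ‖z‖ • p := central_scalar hA p z hp hps hzpos hpz hzp hzcen
  -- star n * n = α z
  have hha₁ : h * a₁ = -(a₁ * α h) := by
    have := hE2.2
    rwa [add_eq_zero_iff_eq_neg] at this
  have hz2 : star (h * a₁) * (h * a₁) = α z := by
    rw [hsn]
    have e1 : h * (h * a₁) = a₁ * α (h * h) := by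
      rw [hha₁, mul_neg, ← mul_assoc, hha₁, neg_mul, neg_neg, mul_assoc, ← map_mul]
    calc α a₁ * h * (h * a₁) = α a₁ * (h * (h * a₁)) := by simp only [mul_assoc]
      _ = α a₁ * (a₁ * α (h * h)) := by rw [e1]
      _ = (α a₁ * a₁) * α (h * h) := by simp only [mul_assoc]
      _ = α (a₁ * α a₁) * α (h * h) := by rw [map_mul α a₁ (α a₁), hα]
      _ = α ((a₁ * α a₁) * (h * h)) := by rw [← map_mul]
      _ = α z := by
          rw [ha₁αa₁, sub_mul, ← mul_assoc p h h, hph, ← hzdef]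
  -- final construction
  rcases eq_or_ne (‖z‖) 0 with ht0 | htne
  · have hz0 : z = 0 := by rw [hscal, ht0, zero_smul]
    have hn0 : h * a₁ = 0 := by
      have : star (h * a₁) * (h * a₁) = 0 := by rw [hz2, hz0, map_zero]
      exact (CStarRing.star_mul_self_eq_zero_iff _).mp this
    have hh0 : h = 0 := E6inj h hE3.1 hn0
    have hvv : a₁ * star a₁ = p := by
      rw [ha₁_star, ha₁αa₁, hh0, mul_zero, sub_zero]
    have hvv2 : star a₁ * a₁ = α p := by
      rw [ha₁_star, show α a₁ * a₁ = α (a₁ * α a₁) from by rw [map_mul, hα], ha₁αa₁, hh0,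
        mul_zero, sub_zero]
    exact ⟨0, Matrix.of fun _ _ => a₁, matrix_one_mul_star hvv, matrix_one_star_mul hvv2⟩
  · have ht : (0 : ℝ) < ‖z‖ := (norm_nonneg z).lt_of_ne (Ne.symm htne)
    set rc : ℂ := Complex.ofReal ((Real.sqrt ‖z‖)⁻¹) with hrc
    set v := rc • (h * a₁) with hvdef
    have hsqrt : Real.sqrt ‖z‖ ≠ 0 := by
      positivity
    have hrct : rc * rc * (‖z‖ : ℂ) = 1 := by
      rw [hrc, ← Complex.ofReal_mul, ← Complex.ofReal_mul, Complex.ofReal_eq_one,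
        ← mul_inv, Real.mul_self_sqrt ht.le]
      exact inv_mul_cancel₀ (by positivity)
    have hzsmul : z = (‖z‖ : ℂ) • p := by
      rw [Complex.coe_smul]
      exact hscal
    have hstarv : star v = rc • star (h * a₁) := by
      rw [hvdef, star_smul, hrc]
      congr 1
      exact Complex.conj_ofReal _
    have hvv : v * star v = p := by
      rw [hvdef, hstarv, smul_mul_smul_comm, hz1, hzsmul, smul_smul, hrct, one_smul]
    have hvv2 : star v * v = α p := by
      rw [hvdef, hstarv, smul_mul_smul_comm, hz2, hzsmul, map_smul, smul_smul, hrct, one_smul]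
    exact ⟨0, Matrix.of fun _ _ => v, matrix_one_mul_star hvv, matrix_one_star_mul hvv2⟩
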